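/- Let M ∈ k(t)^{n×n} be a nonsingular matrix with rows b_0, …, b_{n−1}. Then: (1) M is row reduced if and only if deg(det M) = deg(b_0) + ⋯ + deg(b_{n−1}); (2) there exists a unimodular matrix U ∈ k[t]^{n×n} (i.e., det U ∈ k×) such that U·M is row reduced. -/

import Mathlib

open Classical

/-- Degree of a rational function, with `deg 0 = ⊥`. -/
noncomputable def ratDeg {k : Type*} [Field k] (z : RatFunc k) : WithBot ℤ :=
  if z = 0 then ⊥ else (z.intDegree : WithBot ℤ)

/-- Degree of a row vector: the maximum of the degrees of its entries. -/
noncomputable def rowDeg {k : Type*} [Field k] {n : ℕ} (b : Fin n → RatFunc k) : WithBot ℤ :=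
  Finset.univ.sup fun j => ratDeg (b j)

/-- A square matrix over `k(t)` with rows `b₀, …, b_{n-1}` is row reduced if
`deg (Σ λᵢ bᵢ) = maxᵢ deg (λᵢ bᵢ)` for all `λᵢ ∈ k(t)`. -/
def RowReduced {k : Type*} [Field k] {n : ℕ} (M : Matrix (Fin n) (Fin n) (RatFunc k)) : Prop :=
  ∀ c : Fin n → RatFunc k,
    rowDeg (fun j => ∑ i, c i * M i j) = Finset.univ.sup fun i => ratDeg (c i) + rowDeg (M i)

namespace Stmt12

open Polynomial

variable {k : Type*} [Field k]

@[simp] lemma ratDeg_zero : ratDeg (0 : RatFunc k) = ⊥ := if_pos rfl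

lemma ratDeg_of_ne {z : RatFunc k} (h : z ≠ 0) : ratDeg z = (z.intDegree : WithBot ℤ) := if_neg h

@[simp] lemma ratDeg_eq_bot_iff {z : RatFunc k} : ratDeg z = ⊥ ↔ z = 0 := by
  constructor
  · intro h
    by_contra hz
    rw [ratDeg_of_ne hz] at h
    exact (WithBot.coe_ne_bot) h
  · rintro rfl; simp

lemma ratDeg_mul (x y : RatFunc k) : ratDeg (x * y) = ratDeg x + ratDeg y := by
  by_cases hx : x = 0
  · simp [hx]
  by_cases hy : y = 0
  · simp [hy]
  rw [ratDeg_of_ne hx, ratDeg_of_ne hy, ratDeg_of_ne (mul_ne_zero hx hy),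
    RatFunc.intDegree_mul hx hy]
  push_cast
  rfl

lemma ratDeg_neg (x : RatFunc k) : ratDeg (-x) = ratDeg x := by
  by_cases hx : x = 0
  · simp [hx]
  · rw [ratDeg_of_ne hx, ratDeg_of_ne (neg_ne_zero.2 hx), RatFunc.intDegree_neg]

lemma ratDeg_add_le (x y : RatFunc k) : ratDeg (x + y) ≤ max (ratDeg x) (ratDeg y) := by
  by_cases hy : y = 0
  · simp [hy, le_max_iff]
  by_cases hxy : x + y = 0
  · simp [hxy]
  rw [ratDeg_of_ne hxy]
  by_cases hx : x = 0
  · simp only [hx, zero_add] at hxy ⊢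
    rw [ratDeg_of_ne hy]
    exact le_max_of_le_right (le_refl _)
  rw [ratDeg_of_ne hx, ratDeg_of_ne hy]
  have := RatFunc.intDegree_add_le hy hxy
  rw [le_max_iff] at this ⊢
  rcases this with h | h
  · exact Or.inl (by exact_mod_cast h)
  · exact Or.inr (by exact_mod_cast h)

lemma ratDeg_algebraMap {p : k[X]} (hp : p ≠ 0) :
    ratDeg (algebraMap k[X] (RatFunc k) p) = ((p.natDegree : ℤ) : WithBot ℤ) := by
  rw [ratDeg_of_ne (by simpa using hp), RatFunc.intDegree_polynomial]

/-- leading coefficient of a rational function (the denominator is monic). -/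
noncomputable def lc (z : RatFunc k) : k := z.num.leadingCoeff

@[simp] lemma lc_zero : lc (0 : RatFunc k) = 0 := by simp [lc]

lemma lc_ne_zero {z : RatFunc k} (h : z ≠ 0) : lc z ≠ 0 := by
  simp only [lc, Polynomial.leadingCoeff_ne_zero]
  exact RatFunc.num_ne_zero h

/-- representation-independence of leading coefficients -/
lemma lc_repr {p q : k[X]} (hq : q ≠ 0) {z : RatFunc k}
    (hz : z = algebraMap k[X] (RatFunc k) p / algebraMap k[X] (RatFunc k) q) :
    p.leadingCoeff = lc z * q.leadingCoeff := by
  have hq' : algebraMap k[X] (RatFunc k) q ≠ 0 := by simpa using hq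
  have key : algebraMap k[X] (RatFunc k) (p * z.denom) =
      algebraMap k[X] (RatFunc k) (z.num * q) := by
    rw [map_mul, map_mul]
    have h1 : algebraMap k[X] (RatFunc k) p = z * algebraMap k[X] (RatFunc k) q := by
      rw [hz, div_mul_cancel₀ _ hq']
    have hd : algebraMap k[X] (RatFunc k) z.denom ≠ 0 := by
      simpa using z.denom_ne_zero
    have hzd : algebraMap k[X] (RatFunc k) z.num = z * algebraMap k[X] (RatFunc k) z.denom :=
      (div_eq_iff hd).mp (RatFunc.num_div_denom z)
    linear_combination (algebraMap k[X] (RatFunc k) z.denom) * h1 -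
      (algebraMap k[X] (RatFunc k) q) * hzd
  have := RatFunc.algebraMap_injective (K := k) key
  have h2 := congrArg Polynomial.leadingCoeff this
  rw [Polynomial.leadingCoeff_mul, Polynomial.leadingCoeff_mul,
    (RatFunc.monic_denom z).leadingCoeff, mul_one] at h2
  rw [lc]
  exact h2

lemma intDegree_repr {p q : k[X]} (hp : p ≠ 0) (hq : q ≠ 0) {z : RatFunc k}
    (hz : z = algebraMap k[X] (RatFunc k) p / algebraMap k[X] (RatFunc k) q) :
    z.intDegree = (p.natDegree : ℤ) - q.natDegree := by
  have hq' : algebraMap k[X] (RatFunc k) q ≠ 0 := by simpa using hq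
  have hp' : algebraMap k[X] (RatFunc k) p ≠ 0 := by simpa using hp
  have hz0 : z ≠ 0 := by
    rw [hz]; exact div_ne_zero hp' hq'
  have h1 : z * algebraMap k[X] (RatFunc k) q = algebraMap k[X] (RatFunc k) p := by
    rw [hz, div_mul_cancel₀ _ hq']
  have := congrArg RatFunc.intDegree h1
  rw [RatFunc.intDegree_mul hz0 hq', RatFunc.intDegree_polynomial,
    RatFunc.intDegree_polynomial] at this
  omega

/-- the coefficient of `t^d` in a rational function of degree at most `d`. -/
noncomputable def coefAt (d : ℤ) (z : RatFunc k) : k :=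
  if ratDeg z = (d : WithBot ℤ) then lc z else 0

@[simp] lemma coefAt_zero (d : ℤ) : coefAt d (0 : RatFunc k) = 0 := by
  simp [coefAt]

lemma coefAt_ne_zero_iff {d : ℤ} {z : RatFunc k} : coefAt d z ≠ 0 ↔ ratDeg z = (d : WithBot ℤ) := by
  unfold coefAt
  split_ifs with h
  · simp only [h, iff_true]
    apply lc_ne_zero
    intro hz
    rw [hz] at h; simp at h
  · simpa using h

lemma coefAt_of_deg_eq {d : ℤ} {z : RatFunc k} (h : ratDeg z = (d : WithBot ℤ)) :
    coefAt d z = lc z := if_pos h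

lemma coefAt_of_deg_ne {d : ℤ} {z : RatFunc k} (h : ratDeg z ≠ (d : WithBot ℤ)) :
    coefAt d z = 0 := if_neg h

/-- `coefAt` via an arbitrary fraction representation. -/
lemma coefAt_repr {p q : k[X]} (hq : q ≠ 0) (d : ℤ) (N : ℕ)
    (hN : (N : ℤ) = d + q.natDegree) (hdeg : p.natDegree ≤ N) :
    coefAt d (algebraMap k[X] (RatFunc k) p / algebraMap k[X] (RatFunc k) q)
      = p.coeff N / q.leadingCoeff := by
  set z := algebraMap k[X] (RatFunc k) p / algebraMap k[X] (RatFunc k) q with hz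
  by_cases hp : p = 0
  · simp [hp, hz]
  have hq' : algebraMap k[X] (RatFunc k) q ≠ 0 := by simpa using hq
  have hp' : algebraMap k[X] (RatFunc k) p ≠ 0 := by simpa using hp
  have hz0 : z ≠ 0 := div_ne_zero hp' hq'
  have hdegz : ratDeg z = ((p.natDegree : ℤ) - q.natDegree : ℤ) := by
    rw [ratDeg_of_ne hz0, intDegree_repr hp hq hz]
  rcases eq_or_lt_of_le hdeg with heq | hlt
  · -- degree exactly N
    have hdz : ratDeg z = (d : WithBot ℤ) := by
      rw [hdegz]
      congr 1
      omega
    rw [coefAt_of_deg_eq hdz]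
    have := lc_repr hq hz
    have hql : q.leadingCoeff ≠ 0 := Polynomial.leadingCoeff_ne_zero.2 hq
    rw [← heq, Polynomial.coeff_natDegree, this, mul_div_cancel_right₀ _ hql]
  · have hdz : ratDeg z ≠ (d : WithBot ℤ) := by
      rw [hdegz]
      intro hcontra
      have : (p.natDegree : ℤ) - q.natDegree = d := by exact_mod_cast hcontra
      omega
    rw [coefAt_of_deg_ne hdz, Polynomial.coeff_eq_zero_of_natDegree_lt hlt, zero_div]


lemma lc_mul (x y : RatFunc k) : lc (x * y) = lc x * lc y := by
  by_cases hx : x = 0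
  · simp [hx]
  by_cases hy : y = 0
  · simp [hy]
  have hrep : x * y = algebraMap k[X] (RatFunc k) (x.num * y.num) /
      algebraMap k[X] (RatFunc k) (x.denom * y.denom) := by
    rw [map_mul, map_mul, ← div_mul_div_comm, RatFunc.num_div_denom, RatFunc.num_div_denom]
  have := lc_repr (mul_ne_zero x.denom_ne_zero y.denom_ne_zero) hrep
  rw [Polynomial.leadingCoeff_mul, Polynomial.leadingCoeff_mul,
    (RatFunc.monic_denom x).leadingCoeff, (RatFunc.monic_denom y).leadingCoeff,
    mul_one, mul_one] at this
  rw [← this]; rfl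

lemma lc_neg (x : RatFunc k) : lc (-x) = - lc x := by
  by_cases hx : x = 0
  · simp [hx]
  have hrep : -x = algebraMap k[X] (RatFunc k) (-x.num) /
      algebraMap k[X] (RatFunc k) (x.denom) := by
    rw [map_neg, neg_div, RatFunc.num_div_denom]
  have := lc_repr x.denom_ne_zero hrep
  rw [Polynomial.leadingCoeff_neg, (RatFunc.monic_denom x).leadingCoeff, mul_one] at this
  rw [← this]; rfl

lemma coefAt_neg (d : ℤ) (x : RatFunc k) : coefAt d (-x) = - coefAt d x := by
  unfold coefAt
  rw [ratDeg_neg, lc_neg]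
  split_ifs <;> simp

lemma intDegree_le_of_ratDeg_le {d : ℤ} {x : RatFunc k} (hx0 : x ≠ 0)
    (h : ratDeg x ≤ (d : WithBot ℤ)) : x.intDegree ≤ d := by
  rw [ratDeg_of_ne hx0] at h
  exact_mod_cast h

lemma coefAt_add {d : ℤ} {x y : RatFunc k} (hx : ratDeg x ≤ (d : WithBot ℤ))
    (hy : ratDeg y ≤ (d : WithBot ℤ)) :
    coefAt d (x + y) = coefAt d x + coefAt d y := by
  set a := x.num with ha
  set b := x.denom with hb
  set c := y.num with hc
  set e := y.denom with he
  set t : ℤ := d + b.natDegree + e.natDegree with ht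
  set m : ℕ := (-t).toNat with hm
  have htm : 0 ≤ t + m := by omega
  set N : ℕ := (t + m).toNat with hNdef
  have hN : (N : ℤ) = t + m := Int.toNat_of_nonneg htm
  set q : k[X] := b * e * Polynomial.X ^ m with hqdef
  have hb0 : b ≠ 0 := x.denom_ne_zero
  have he0 : e ≠ 0 := y.denom_ne_zero
  have hX0 : (Polynomial.X : k[X]) ^ m ≠ 0 := pow_ne_zero _ Polynomial.X_ne_zero
  have hq : q ≠ 0 := mul_ne_zero (mul_ne_zero hb0 he0) hX0
  have hqdeg : (q.natDegree : ℤ) = (b.natDegree : ℤ) + e.natDegree + m := by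
    rw [hqdef, Polynomial.natDegree_mul (mul_ne_zero hb0 he0) hX0,
      Polynomial.natDegree_mul hb0 he0, Polynomial.natDegree_X_pow]
    push_cast; ring
  have hNq : (N : ℤ) = d + q.natDegree := by rw [hN, hqdeg, ht]; ring
  have hb' : algebraMap k[X] (RatFunc k) b ≠ 0 := by simpa using hb0
  have he' : algebraMap k[X] (RatFunc k) e ≠ 0 := by simpa using he0
  have hX' : algebraMap k[X] (RatFunc k) (Polynomial.X ^ m) ≠ 0 :=
    (map_ne_zero_iff _ (RatFunc.algebraMap_injective k)).mpr hX0
  set px : k[X] := a * e * Polynomial.X ^ m with hpx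
  set py : k[X] := c * b * Polynomial.X ^ m with hpy
  have hxrep : x = algebraMap k[X] (RatFunc k) px / algebraMap k[X] (RatFunc k) q := by
    rw [hpx, hqdef, map_mul, map_mul, map_mul, map_mul]
    rw [mul_div_mul_right _ _ hX']
    rw [mul_comm (algebraMap k[X] (RatFunc k) a) _, mul_comm (algebraMap k[X] (RatFunc k) b) _]
    rw [mul_div_mul_left _ _ he']
    exact (RatFunc.num_div_denom x).symm
  have hyrep : y = algebraMap k[X] (RatFunc k) py / algebraMap k[X] (RatFunc k) q := by
    rw [hpy, hqdef, map_mul, map_mul, map_mul, map_mul]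
    rw [mul_div_mul_right _ _ hX']
    rw [mul_comm (algebraMap k[X] (RatFunc k) b) _]
    rw [mul_div_mul_right _ _ hb']
    exact (RatFunc.num_div_denom y).symm
  have hsrep : x + y = algebraMap k[X] (RatFunc k) (px + py) / algebraMap k[X] (RatFunc k) q := by
    rw [hxrep, hyrep, ← add_div, ← map_add]
  have hdx : px.natDegree ≤ N := by
    by_cases ha0 : a = 0
    · simp [hpx, ha0]
    have hx0 : x ≠ 0 := fun h => ha0 (by rw [ha, h, RatFunc.num_zero])
    have h1 : (a.natDegree : ℤ) - b.natDegree ≤ d := intDegree_le_of_ratDeg_le hx0 hx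
    have h2 : px.natDegree = a.natDegree + e.natDegree + m := by
      rw [hpx, Polynomial.natDegree_mul (mul_ne_zero ha0 he0) hX0,
        Polynomial.natDegree_mul ha0 he0, Polynomial.natDegree_X_pow]
    omega
  have hdy : py.natDegree ≤ N := by
    by_cases hc0 : c = 0
    · simp [hpy, hc0]
    have hy0 : y ≠ 0 := fun h => hc0 (by rw [hc, h, RatFunc.num_zero])
    have h1 : (c.natDegree : ℤ) - e.natDegree ≤ d := intDegree_le_of_ratDeg_le hy0 hy
    have h2 : py.natDegree = c.natDegree + b.natDegree + m := by
      rw [hpy, Polynomial.natDegree_mul (mul_ne_zero hc0 hb0) hX0,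
        Polynomial.natDegree_mul hc0 hb0, Polynomial.natDegree_X_pow]
    omega
  have hds : (px + py).natDegree ≤ N :=
    le_trans (Polynomial.natDegree_add_le _ _) (max_le hdx hdy)
  rw [hsrep, hxrep, hyrep, coefAt_repr hq d N hNq hds, coefAt_repr hq d N hNq hdx,
    coefAt_repr hq d N hNq hdy, Polynomial.coeff_add, add_div]

lemma coefAt_mul {d e : ℤ} {x y : RatFunc k} (hx : ratDeg x ≤ (d : WithBot ℤ))
    (hy : ratDeg y ≤ (e : WithBot ℤ)) :
    coefAt (d + e) (x * y) = coefAt d x * coefAt e y := by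
  by_cases hx0 : x = 0
  · simp [hx0]
  by_cases hy0 : y = 0
  · simp [hy0]
  have hxy0 : x * y ≠ 0 := mul_ne_zero hx0 hy0
  have hxd := intDegree_le_of_ratDeg_le hx0 hx
  have hye := intDegree_le_of_ratDeg_le hy0 hy
  have hdegmul : ratDeg (x * y) = ((x.intDegree + y.intDegree : ℤ) : WithBot ℤ) := by
    rw [ratDeg_of_ne hxy0, RatFunc.intDegree_mul hx0 hy0]
  by_cases hdx : x.intDegree = d
  · by_cases hdy : y.intDegree = e
    · rw [coefAt_of_deg_eq (show ratDeg (x * y) = ((d + e : ℤ) : WithBot ℤ) by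
          rw [hdegmul, hdx, hdy]),
        coefAt_of_deg_eq (show ratDeg x = (d : WithBot ℤ) by rw [ratDeg_of_ne hx0, hdx]),
        coefAt_of_deg_eq (show ratDeg y = (e : WithBot ℤ) by rw [ratDeg_of_ne hy0, hdy]), lc_mul]
    · rw [coefAt_of_deg_ne (show ratDeg (x * y) ≠ ((d + e : ℤ) : WithBot ℤ) by
          rw [hdegmul]; intro hco; exact hdy (by
            have : x.intDegree + y.intDegree = d + e := by exact_mod_cast hco
            omega)),
        coefAt_of_deg_ne (show ratDeg y ≠ (e : WithBot ℤ) by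
          rw [ratDeg_of_ne hy0]; exact_mod_cast hdy), mul_zero]
  · rw [coefAt_of_deg_ne (show ratDeg (x * y) ≠ ((d + e : ℤ) : WithBot ℤ) by
        rw [hdegmul]; intro hco; exact hdx (by
          have : x.intDegree + y.intDegree = d + e := by exact_mod_cast hco
          omega)),
      coefAt_of_deg_ne (show ratDeg x ≠ (d : WithBot ℤ) by
        rw [ratDeg_of_ne hx0]; exact_mod_cast hdx), zero_mul]

lemma coefAt_sum {ι : Type*} (s : Finset ι) (f : ι → RatFunc k) (d : ℤ)
    (h : ∀ i ∈ s, ratDeg (f i) ≤ (d : WithBot ℤ)) :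
    ratDeg (∑ i ∈ s, f i) ≤ (d : WithBot ℤ) ∧
      coefAt d (∑ i ∈ s, f i) = ∑ i ∈ s, coefAt d (f i) := by
  induction s using Finset.cons_induction with
  | empty => simp
  | cons a s ha ih =>
    rw [Finset.sum_cons, Finset.sum_cons]
    have h1 := h a (Finset.mem_cons_self a s)
    obtain ⟨ih1, ih2⟩ := ih (fun i hi => h i (Finset.mem_cons_of_mem hi))
    exact ⟨(ratDeg_add_le _ _).trans (max_le h1 ih1), by rw [coefAt_add h1 ih1, ih2]⟩

@[simp] lemma lc_one : lc (1 : RatFunc k) = 1 := by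
  rw [lc, RatFunc.num_one, Polynomial.leadingCoeff_one]

@[simp] lemma ratDeg_one : ratDeg (1 : RatFunc k) = ((0 : ℤ) : WithBot ℤ) := by
  rw [ratDeg_of_ne (one_ne_zero' (RatFunc k)), RatFunc.intDegree_one]

lemma coefAt_prod {ι : Type*} (s : Finset ι) (f : ι → RatFunc k) (e : ι → ℤ)
    (h : ∀ i ∈ s, ratDeg (f i) ≤ (e i : WithBot ℤ)) :
    ratDeg (∏ i ∈ s, f i) ≤ ((∑ i ∈ s, e i : ℤ) : WithBot ℤ) ∧
      coefAt (∑ i ∈ s, e i) (∏ i ∈ s, f i) = ∏ i ∈ s, coefAt (e i) (f i) := by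
  induction s using Finset.cons_induction with
  | empty =>
    simp only [Finset.prod_empty, Finset.sum_empty]
    constructor
    · rw [ratDeg_one]
    · rw [coefAt_of_deg_eq (by rw [ratDeg_one]), lc_one]
  | cons a s ha ih =>
    rw [Finset.prod_cons, Finset.sum_cons, Finset.prod_cons]
    have h1 := h a (Finset.mem_cons_self a s)
    obtain ⟨ih1, ih2⟩ := ih (fun i hi => h i (Finset.mem_cons_of_mem hi))
    constructor
    · rw [ratDeg_mul]
      calc ratDeg (f a) + ratDeg (∏ i ∈ s, f i) ≤ (e a : WithBot ℤ) + ((∑ i ∈ s, e i : ℤ) : WithBot ℤ) :=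
            add_le_add h1 ih1
        _ = ((e a + ∑ i ∈ s, e i : ℤ) : WithBot ℤ) := by push_cast; rfl
    · rw [coefAt_mul h1 ih1, ih2]


lemma wb_helper {a : WithBot ℤ} {p q : ℤ} (h : a + (p : WithBot ℤ) ≤ (q : WithBot ℤ)) :
    a ≤ ((q - p : ℤ) : WithBot ℤ) := by
  induction a using WithBot.recBotCoe with
  | bot => exact bot_le
  | coe a =>
    rw [← WithBot.coe_add, WithBot.coe_le_coe] at h
    exact WithBot.coe_le_coe.mpr (by omega)

variable {n : ℕ}

lemma ratDeg_le_rowDeg (b : Fin n → RatFunc k) (j : Fin n) : ratDeg (b j) ≤ rowDeg b :=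
  Finset.le_sup (f := fun j => ratDeg (b j)) (Finset.mem_univ j)

lemma rowDeg_le {b : Fin n → RatFunc k} {a : WithBot ℤ} (h : ∀ j, ratDeg (b j) ≤ a) :
    rowDeg b ≤ a :=
  Finset.sup_le fun j _ => h j

lemma rowDeg_eq_int {M : Matrix (Fin n) (Fin n) (RatFunc k)} (hM : M.det ≠ 0) (i : Fin n) :
    ∃ di : ℤ, rowDeg (M i) = (di : WithBot ℤ) := by
  have hrow : ∃ j, M i j ≠ 0 := by
    by_contra h
    push_neg at h
    exact hM (Matrix.det_eq_zero_of_row_eq_zero i h)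
  obtain ⟨j, hj⟩ := hrow
  have hne : rowDeg (M i) ≠ ⊥ := by
    intro h
    have hle : ratDeg (M i j) ≤ rowDeg (M i) := ratDeg_le_rowDeg (M i) j
    rw [h, le_bot_iff, ratDeg_eq_bot_iff] at hle
    exact hj hle
  exact ⟨(rowDeg (M i)).unbot hne, (WithBot.coe_unbot _ hne).symm⟩

lemma ratDeg_entry_le {M : Matrix (Fin n) (Fin n) (RatFunc k)} {d : Fin n → ℤ}
    (hd : ∀ i, rowDeg (M i) = (d i : WithBot ℤ)) (i j : Fin n) :
    ratDeg (M i j) ≤ (d i : WithBot ℤ) := by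
  rw [← hd i]
  exact ratDeg_le_rowDeg (M i) j

lemma combo (M : Matrix (Fin n) (Fin n) (RatFunc k)) (d : Fin n → ℤ)
    (hd : ∀ i, rowDeg (M i) = (d i : WithBot ℤ)) (c : Fin n → RatFunc k) (D : ℤ)
    (h : ∀ i, ratDeg (c i) + (d i : WithBot ℤ) ≤ (D : WithBot ℤ)) (j : Fin n) :
    ratDeg (∑ i, c i * M i j) ≤ (D : WithBot ℤ) ∧
      coefAt D (∑ i, c i * M i j) = ∑ i, coefAt (D - d i) (c i) * coefAt (d i) (M i j) := by
  have hterm : ∀ i ∈ Finset.univ, ratDeg (c i * M i j) ≤ (D : WithBot ℤ) := by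
    intro i _
    rw [ratDeg_mul]
    calc ratDeg (c i) + ratDeg (M i j) ≤ ratDeg (c i) + (d i : WithBot ℤ) :=
          add_le_add_right (ratDeg_entry_le hd i j) _
      _ ≤ (D : WithBot ℤ) := h i
  obtain ⟨h1, h2⟩ := coefAt_sum Finset.univ (fun i => c i * M i j) D hterm
  refine ⟨h1, h2.trans ?_⟩
  refine Finset.sum_congr rfl fun i _ => ?_
  have key := coefAt_mul (wb_helper (h i)) (ratDeg_entry_le hd i j)
  rw [show D - d i + d i = D by ring] at key
  exact key

lemma coefAt_det (M : Matrix (Fin n) (Fin n) (RatFunc k)) (d : Fin n → ℤ)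
    (hd : ∀ i, rowDeg (M i) = (d i : WithBot ℤ)) :
    ratDeg M.det ≤ ((∑ i, d i : ℤ) : WithBot ℤ) ∧
      coefAt (∑ i, d i) M.det = Matrix.det (Matrix.of fun i j => coefAt (d i) (M i j)) := by
  have hP : ∀ σ : Equiv.Perm (Fin n),
      ratDeg (∏ i, M (σ i) i) ≤ ((∑ i, d i : ℤ) : WithBot ℤ) ∧
      coefAt (∑ i, d i) (∏ i, M (σ i) i) = ∏ i, coefAt (d (σ i)) (M (σ i) i) := by
    intro σ
    have hsum : (∑ i, d (σ i)) = ∑ i, d i := Equiv.sum_comp σ d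
    have := coefAt_prod Finset.univ (fun i => M (σ i) i) (fun i => d (σ i))
      (fun i _ => ratDeg_entry_le hd (σ i) i)
    rwa [hsum] at this
  have hsgn : ∀ σ : Equiv.Perm (Fin n),
      ratDeg (Equiv.Perm.sign σ • ∏ i, M (σ i) i) ≤ ((∑ i, d i : ℤ) : WithBot ℤ) ∧
      coefAt (∑ i, d i) (Equiv.Perm.sign σ • ∏ i, M (σ i) i) =
        Equiv.Perm.sign σ • ∏ i, coefAt (d (σ i)) (M (σ i) i) := by
    intro σ
    obtain ⟨h1, h2⟩ := hP σ
    rcases Int.units_eq_one_or (Equiv.Perm.sign σ) with h | h <;>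
      rw [h] <;>
      simp only [Units.smul_def, Units.val_neg, Units.val_one, neg_one_zsmul, one_zsmul,
        ratDeg_neg, coefAt_neg]
    · exact ⟨h1, h2⟩
    · exact ⟨h1, by rw [h2]⟩
  rw [Matrix.det_apply M, Matrix.det_apply]
  constructor
  · exact (coefAt_sum Finset.univ _ _ (fun σ _ => (hsgn σ).1)).1
  · rw [(coefAt_sum Finset.univ _ _ (fun σ _ => (hsgn σ).1)).2]
    exact Finset.sum_congr rfl fun σ _ => (hsgn σ).2

lemma keyDeg {M : Matrix (Fin n) (Fin n) (RatFunc k)} (hM : M.det ≠ 0) {d : Fin n → ℤ}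
    (hd : ∀ i, rowDeg (M i) = (d i : WithBot ℤ)) :
    ratDeg M.det = ((∑ i, d i : ℤ) : WithBot ℤ) ↔
      Matrix.det (Matrix.of fun i j => coefAt (d i) (M i j)) ≠ 0 := by
  obtain ⟨h1, h2⟩ := coefAt_det M d hd
  constructor
  · intro h
    rw [← h2, coefAt_of_deg_eq h]
    exact lc_ne_zero hM
  · intro h
    exact coefAt_ne_zero_iff.mp (by rw [h2]; exact h)

lemma rowReduced_of_detL {M : Matrix (Fin n) (Fin n) (RatFunc k)} (_hM : M.det ≠ 0)
    {d : Fin n → ℤ} (hd : ∀ i, rowDeg (M i) = (d i : WithBot ℤ))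
    (hL : Matrix.det (Matrix.of fun i j => coefAt (d i) (M i j)) ≠ 0) : RowReduced M := by
  intro c
  by_cases hc : ∀ i, c i = 0
  · have hzero : ∀ j, (∑ i, c i * M i j) = 0 := fun j =>
      Finset.sum_eq_zero fun i _ => by rw [hc i, zero_mul]
    have l1 : rowDeg (fun j => ∑ i, c i * M i j) = ⊥ := by
      simp only [rowDeg]
      refine le_antisymm (Finset.sup_le fun j _ => ?_) bot_le
      rw [hzero j, ratDeg_zero]
    have l2 : (Finset.univ.sup fun i => ratDeg (c i) + rowDeg (M i)) = ⊥ := by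
      refine le_antisymm (Finset.sup_le fun i _ => ?_) bot_le
      rw [hc i, ratDeg_zero, WithBot.bot_add]
    rw [l1, l2]
  push_neg at hc
  obtain ⟨i0, hi0⟩ := hc
  obtain ⟨i1, -, hS⟩ := Finset.exists_mem_eq_sup Finset.univ ⟨i0, Finset.mem_univ i0⟩
    (fun i => ratDeg (c i) + rowDeg (M i))
  have hc1 : c i1 ≠ 0 := by
    intro h
    have hle : ratDeg (c i0) + rowDeg (M i0) ≤
        Finset.univ.sup fun i => ratDeg (c i) + rowDeg (M i) :=
      Finset.le_sup (f := fun i => ratDeg (c i) + rowDeg (M i)) (Finset.mem_univ i0)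
    rw [hS, h, ratDeg_zero, WithBot.bot_add, le_bot_iff, hd i0, WithBot.add_eq_bot] at hle
    rcases hle with h' | h'
    · exact hi0 (ratDeg_eq_bot_iff.mp h')
    · exact WithBot.coe_ne_bot h'
  set D : ℤ := (c i1).intDegree + d i1 with hDdef
  have hSD : (Finset.univ.sup fun i => ratDeg (c i) + rowDeg (M i)) = (D : WithBot ℤ) := by
    rw [hS, hd i1, ratDeg_of_ne hc1, hDdef]
    push_cast
    rfl
  have hbound : ∀ i, ratDeg (c i) + (d i : WithBot ℤ) ≤ (D : WithBot ℤ) := fun i => by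
    rw [← hd i, ← hSD]
    exact Finset.le_sup (f := fun i => ratDeg (c i) + rowDeg (M i)) (Finset.mem_univ i)
  rw [hSD]
  apply le_antisymm
  · exact rowDeg_le fun j => (combo M d hd c D hbound j).1
  · set γ : Fin n → k := fun i => coefAt (D - d i) (c i) with hγdef
    have hγ : γ ≠ 0 := by
      intro h
      have h0 : γ i1 = 0 := by rw [h]; rfl
      have hne : coefAt (D - d i1) (c i1) ≠ 0 := coefAt_ne_zero_iff.mpr (by
        rw [ratDeg_of_ne hc1, hDdef]
        norm_num)
      exact hne h0
    have hvec : Matrix.vecMul γ (Matrix.of fun i j => coefAt (d i) (M i j)) ≠ 0 := by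
      intro h0
      exact hL (Matrix.exists_vecMul_eq_zero_iff.mp ⟨γ, hγ, h0⟩)
    rw [Function.ne_iff] at hvec
    obtain ⟨j, hj⟩ := hvec
    have hsum : coefAt D (∑ i, c i * M i j) ≠ 0 := by
      rw [(combo M d hd c D hbound j).2]
      simpa [Matrix.vecMul, dotProduct] using hj
    have hdeg : ratDeg (∑ i, c i * M i j) = (D : WithBot ℤ) := coefAt_ne_zero_iff.mp hsum
    calc (D : WithBot ℤ) = ratDeg (∑ i, c i * M i j) := hdeg.symm
      _ ≤ rowDeg (fun j => ∑ i, c i * M i j) := ratDeg_le_rowDeg (fun j => ∑ i, c i * M i j) j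


lemma lc_algebraMap (p : k[X]) : lc (algebraMap k[X] (RatFunc k) p) = p.leadingCoeff := by
  have hrep : algebraMap k[X] (RatFunc k) p =
      algebraMap k[X] (RatFunc k) p / algebraMap k[X] (RatFunc k) 1 := by simp
  have := lc_repr one_ne_zero hrep
  rw [Polynomial.leadingCoeff_one, mul_one] at this
  exact this.symm

lemma coefAt_CXpow (a : k) (t : ℕ) (e : ℤ) (he : e = t) :
    coefAt e (algebraMap k[X] (RatFunc k) (Polynomial.C a * Polynomial.X ^ t)) = a := by
  by_cases ha : a = 0
  · simp [ha]
  have hp : Polynomial.C a * Polynomial.X ^ t ≠ 0 :=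
    mul_ne_zero (Polynomial.C_ne_zero.mpr ha) (pow_ne_zero _ Polynomial.X_ne_zero)
  have hdeg : ratDeg (algebraMap k[X] (RatFunc k) (Polynomial.C a * Polynomial.X ^ t)) =
      (e : WithBot ℤ) := by
    rw [ratDeg_algebraMap hp, Polynomial.natDegree_C_mul_X_pow t a ha, he]
  rw [coefAt_of_deg_eq hdeg, lc_algebraMap, Polynomial.leadingCoeff_C_mul_X_pow]

/-- the elementary reduction step -/
lemma step (M : Matrix (Fin n) (Fin n) (RatFunc k)) (d : Fin n → ℤ)
    (hd : ∀ i, rowDeg (M i) = (d i : WithBot ℤ)) (γ : Fin n → k) (m : Fin n)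
    (hγm : γ m ≠ 0) (hmax : ∀ i, γ i ≠ 0 → d i ≤ d m)
    (hker : ∀ j, ∑ i, γ i * coefAt (d i) (M i j) = 0) :
    (∀ j, ratDeg (∑ i, (algebraMap k[X] (RatFunc k)
        (Polynomial.C (γ i) * Polynomial.X ^ (d m - d i).toNat)) * M i j) < ((d m : ℤ) : WithBot ℤ))
    ∧ (Finset.univ.sup fun i => ratDeg ((algebraMap k[X] (RatFunc k))
        (Polynomial.C (γ i) * Polynomial.X ^ (d m - d i).toNat)) + rowDeg (M i))
        = ((d m : ℤ) : WithBot ℤ) := by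
  set c : Fin n → RatFunc k := fun i =>
    algebraMap k[X] (RatFunc k) (Polynomial.C (γ i) * Polynomial.X ^ (d m - d i).toNat) with hc
  have hcz : ∀ i, γ i = 0 → c i = 0 := by
    intro i hi
    rw [hc]
    simp [hi]
  have hcd : ∀ i, γ i ≠ 0 → ratDeg (c i) = ((d m - d i : ℤ) : WithBot ℤ) := by
    intro i hi
    have hp : Polynomial.C (γ i) * Polynomial.X ^ (d m - d i).toNat ≠ 0 :=
      mul_ne_zero (Polynomial.C_ne_zero.mpr hi) (pow_ne_zero _ Polynomial.X_ne_zero)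
    rw [hc]
    simp only
    rw [ratDeg_algebraMap hp, Polynomial.natDegree_C_mul_X_pow _ _ hi]
    congr 1
    exact Int.toNat_of_nonneg (by have := hmax i hi; omega)
  have hcoef : ∀ i, coefAt (d m - d i) (c i) = γ i := by
    intro i
    by_cases hi : γ i = 0
    · rw [hcz i hi, hi, coefAt_zero]
    · rw [hc]
      exact coefAt_CXpow _ _ _ (Int.toNat_of_nonneg (by have := hmax i hi; omega)).symm
  have hbound : ∀ i, ratDeg (c i) + ((d i : ℤ) : WithBot ℤ) ≤ ((d m : ℤ) : WithBot ℤ) := by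
    intro i
    by_cases hi : γ i = 0
    · rw [hcz i hi, ratDeg_zero, WithBot.bot_add]
      exact bot_le
    · rw [hcd i hi, ← WithBot.coe_add, WithBot.coe_le_coe]
      omega
  constructor
  · intro j
    show ratDeg (∑ i, c i * M i j) < ((d m : ℤ) : WithBot ℤ)
    obtain ⟨h1, h2⟩ := combo M d hd c (d m) hbound j
    have hz : coefAt (d m) (∑ i, c i * M i j) = 0 := by
      rw [h2]
      rw [show (∑ i, coefAt (d m - d i) (c i) * coefAt (d i) (M i j)) =
          ∑ i, γ i * coefAt (d i) (M i j) from
        Finset.sum_congr rfl fun i _ => by rw [hcoef i]]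
      exact hker j
    have hne : ratDeg (∑ i, c i * M i j) ≠ ((d m : ℤ) : WithBot ℤ) := by
      intro h
      exact coefAt_ne_zero_iff.mpr h hz
    exact lt_of_le_of_ne h1 hne
  · apply le_antisymm
    · apply Finset.sup_le
      intro i _
      show ratDeg (c i) + rowDeg (M i) ≤ _
      rw [hd i]
      exact hbound i
    · have : ratDeg (c m) + rowDeg (M m) = ((d m : ℤ) : WithBot ℤ) := by
        rw [hcd m hγm, hd m, ← WithBot.coe_add]
        congr 1
        omega
      rw [← this]
      exact Finset.le_sup (f := fun i => ratDeg (c i) + rowDeg (M i)) (Finset.mem_univ m)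

lemma detL_of_rowReduced {M : Matrix (Fin n) (Fin n) (RatFunc k)} (_hM : M.det ≠ 0)
    {d : Fin n → ℤ} (hd : ∀ i, rowDeg (M i) = (d i : WithBot ℤ)) (hR : RowReduced M) :
    Matrix.det (Matrix.of fun i j => coefAt (d i) (M i j)) ≠ 0 := by
  intro hL0
  obtain ⟨γ, hγ0, hγker⟩ := Matrix.exists_vecMul_eq_zero_iff.mpr hL0
  have hsupp : (Finset.univ.filter fun i => γ i ≠ 0).Nonempty := by
    rw [Function.ne_iff] at hγ0
    obtain ⟨i, hi⟩ := hγ0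
    exact ⟨i, Finset.mem_filter.mpr ⟨Finset.mem_univ i, by simpa using hi⟩⟩
  obtain ⟨m, hmmem, hmax'⟩ := Finset.exists_max_image _ d hsupp
  have hγm : γ m ≠ 0 := (Finset.mem_filter.mp hmmem).2
  have hmax : ∀ i, γ i ≠ 0 → d i ≤ d m := fun i hi =>
    hmax' i (Finset.mem_filter.mpr ⟨Finset.mem_univ i, hi⟩)
  have hker : ∀ j, ∑ i, γ i * coefAt (d i) (M i j) = 0 := fun j => by
    have := congrFun hγker j
    simpa [Matrix.vecMul, dotProduct] using this
  obtain ⟨ha, hb⟩ := step M d hd γ m hγm hmax hker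
  have hRR := hR (fun i =>
    algebraMap k[X] (RatFunc k) (Polynomial.C (γ i) * Polynomial.X ^ (d m - d i).toNat))
  rw [hb] at hRR
  have hlt : rowDeg (fun j => ∑ i, (algebraMap k[X] (RatFunc k)
      (Polynomial.C (γ i) * Polynomial.X ^ (d m - d i).toNat)) * M i j)
      < ((d m : ℤ) : WithBot ℤ) := by
    simp only [rowDeg]
    rw [Finset.sup_lt_iff (by exact WithBot.bot_lt_coe _)]
    exact fun j _ => ha j
  rw [hRR] at hlt
  exact lt_irrefl _ hlt


lemma coe_sum_wb {ι : Type*} (s : Finset ι) (f : ι → ℤ) :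
    ((∑ i ∈ s, f i : ℤ) : WithBot ℤ) = ∑ i ∈ s, ((f i : ℤ) : WithBot ℤ) := by
  induction s using Finset.cons_induction with
  | empty => simp
  | cons a s ha ih => rw [Finset.sum_cons, Finset.sum_cons, WithBot.coe_add, ih]

lemma part2_aux (M : Matrix (Fin n) (Fin n) (RatFunc k)) (hM : M.det ≠ 0)
    (d : Fin n → ℤ) (hd : ∀ i, rowDeg (M i) = (d i : WithBot ℤ)) :
    RowReduced M ∨
    ∃ (U₀ : Matrix (Fin n) (Fin n) (Polynomial k)) (d' : Fin n → ℤ),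
      ((U₀.map ⇑(algebraMap (Polynomial k) (RatFunc k))) * M).det ≠ 0 ∧
      (∀ i, rowDeg (((U₀.map ⇑(algebraMap (Polynomial k) (RatFunc k))) * M) i)
        = (d' i : WithBot ℤ)) ∧
      (∃ u0 : k, u0 ≠ 0 ∧ U₀.det = Polynomial.C u0) ∧
      (∑ i, d' i) - ((U₀.map ⇑(algebraMap (Polynomial k) (RatFunc k))) * M).det.intDegree
        < (∑ i, d i) - M.det.intDegree ∧
      0 < (∑ i, d i) - M.det.intDegree := by
  by_cases hL : Matrix.det (Matrix.of fun i j => coefAt (d i) (M i j)) ≠ 0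
  · exact Or.inl (rowReduced_of_detL hM hd hL)
  right
  rw [not_not] at hL
  obtain ⟨γ, hγ0, hγker⟩ := Matrix.exists_vecMul_eq_zero_iff.mpr hL
  have hsupp : (Finset.univ.filter fun i => γ i ≠ 0).Nonempty := by
    rw [Function.ne_iff] at hγ0
    obtain ⟨i, hi⟩ := hγ0
    exact ⟨i, Finset.mem_filter.mpr ⟨Finset.mem_univ i, by simpa using hi⟩⟩
  obtain ⟨m, hmmem, hmax'⟩ := Finset.exists_max_image _ d hsupp
  have hγm : γ m ≠ 0 := by simpa using (Finset.mem_filter.mp hmmem).2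
  have hmax : ∀ i, γ i ≠ 0 → d i ≤ d m := fun i hi =>
    hmax' i (Finset.mem_filter.mpr ⟨Finset.mem_univ i, hi⟩)
  have hker : ∀ j, ∑ i, γ i * coefAt (d i) (M i j) = 0 := fun j => by
    have := congrFun hγker j
    simpa [Matrix.vecMul, dotProduct] using this
  obtain ⟨ha, -⟩ := step M d hd γ m hγm hmax hker
  -- positivity of the measure
  have hle := (coefAt_det M d hd).1
  have hnedeg : ratDeg M.det ≠ ((∑ i, d i : ℤ) : WithBot ℤ) := by
    intro h
    exact ((keyDeg hM hd).mp h) hL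
  have hpos : 0 < (∑ i, d i) - M.det.intDegree := by
    rw [ratDeg_of_ne hM] at hle hnedeg
    have h1 : M.det.intDegree ≤ ∑ i, d i := by exact_mod_cast hle
    have h2 : M.det.intDegree ≠ ∑ i, d i := fun h => hnedeg (by exact_mod_cast h)
    omega
  set r : Fin n → k[X] := fun i => Polynomial.C (γ i) * Polynomial.X ^ (d m - d i).toNat with hr
  set U₀ := Matrix.updateRow (1 : Matrix (Fin n) (Fin n) k[X]) m r with hU₀
  have hrsum : r = ∑ l, r l • (1 : Matrix (Fin n) (Fin n) k[X]) l := by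
    funext j
    simp only [Finset.sum_apply, Pi.smul_apply, Matrix.one_apply, smul_eq_mul, mul_ite,
      mul_one, mul_zero]
    rw [Finset.sum_ite_eq' Finset.univ j r]
    simp
  have hU0det : U₀.det = Polynomial.C (γ m) := by
    rw [hU₀, hrsum, Matrix.det_updateRow_sum, Matrix.det_one, smul_eq_mul, mul_one]
    show Polynomial.C (γ m) * Polynomial.X ^ (d m - d m).toNat = _
    simp
  have hC0 : algebraMap k[X] (RatFunc k) (Polynomial.C (γ m)) ≠ 0 :=
    (map_ne_zero_iff _ (RatFunc.algebraMap_injective k)).mpr (Polynomial.C_ne_zero.mpr hγm)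
  have hMdet' : ((U₀.map ⇑(algebraMap (Polynomial k) (RatFunc k))) * M).det
      = algebraMap k[X] (RatFunc k) (Polynomial.C (γ m)) * M.det := by
    have hh : (U₀.map ⇑(algebraMap k[X] (RatFunc k))).det
        = algebraMap k[X] (RatFunc k) U₀.det := by
      rw [← RingHom.mapMatrix_apply, ← RingHom.map_det]
    rw [Matrix.det_mul, hh, hU0det]
  have hM' : ((U₀.map ⇑(algebraMap (Polynomial k) (RatFunc k))) * M).det ≠ 0 := by
    rw [hMdet']
    exact mul_ne_zero hC0 hM
  have hint : ((U₀.map ⇑(algebraMap (Polynomial k) (RatFunc k))) * M).det.intDegree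
      = M.det.intDegree := by
    rw [hMdet', RatFunc.intDegree_mul hC0 hM, RatFunc.intDegree_polynomial,
      Polynomial.natDegree_C]
    simp
  have hrow_ne : ∀ i, i ≠ m → ((U₀.map ⇑(algebraMap (Polynomial k) (RatFunc k))) * M) i = M i := by
    intro i hi
    funext j
    rw [Matrix.mul_apply]
    have hent : ∀ l, (U₀.map ⇑(algebraMap (Polynomial k) (RatFunc k))) i l
        = if i = l then 1 else 0 := by
      intro l
      rw [Matrix.map_apply, hU₀, Matrix.updateRow_ne hi, Matrix.one_apply]
      split_ifs <;> simp
    simp only [hent, ite_mul, one_mul, zero_mul]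
    rw [Finset.sum_ite_eq Finset.univ i (fun l => M l j)]
    simp
  have hrow_m : ∀ j, ((U₀.map ⇑(algebraMap (Polynomial k) (RatFunc k))) * M) m j
      = ∑ i, (algebraMap k[X] (RatFunc k)
          (Polynomial.C (γ i) * Polynomial.X ^ (d m - d i).toNat)) * M i j := by
    intro j
    rw [Matrix.mul_apply]
    refine Finset.sum_congr rfl fun l _ => ?_
    rw [Matrix.map_apply, hU₀, Matrix.updateRow_self]
  obtain ⟨dm', hdm'⟩ := rowDeg_eq_int hM' m
  have hdm'lt : dm' < d m := by
    have h1 : rowDeg (((U₀.map ⇑(algebraMap (Polynomial k) (RatFunc k))) * M) m)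
        < ((d m : ℤ) : WithBot ℤ) := by
      simp only [rowDeg]
      rw [Finset.sup_lt_iff (WithBot.bot_lt_coe _)]
      intro j _
      rw [hrow_m j]
      exact ha j
    rw [hdm'] at h1
    exact_mod_cast h1
  set d' : Fin n → ℤ := fun i => if i = m then dm' else d i with hd'def
  refine ⟨U₀, d', hM', ?_, ⟨γ m, hγm, hU0det⟩, ?_, hpos⟩
  · intro i
    by_cases hi : i = m
    · subst hi
      have : d' i = dm' := by simp [hd'def]
      rw [this]
      exact hdm'
    · rw [hrow_ne i hi]
      have : d' i = d i := by simp [hd'def, hi]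
      rw [this]
      exact hd i
  · rw [hint]
    have hsum' : (∑ i, d' i) < ∑ i, d i := by
      refine Finset.sum_lt_sum (fun i _ => ?_) ⟨m, Finset.mem_univ m, ?_⟩
      · by_cases hi : i = m
        · subst hi
          have : d' i = dm' := by simp [hd'def]
          rw [this]
          omega
        · have : d' i = d i := by simp [hd'def, hi]
          rw [this]
      · have : d' m = dm' := by simp [hd'def]
        rw [this]
        omega
    omega

lemma part2 (N : ℕ) : ∀ (M : Matrix (Fin n) (Fin n) (RatFunc k)), M.det ≠ 0 →
    ∀ (d : Fin n → ℤ), (∀ i, rowDeg (M i) = (d i : WithBot ℤ)) →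
    ((∑ i, d i) - M.det.intDegree).toNat ≤ N →
    ∃ U : Matrix (Fin n) (Fin n) (Polynomial k),
      (∃ u : k, u ≠ 0 ∧ U.det = Polynomial.C u) ∧
      RowReduced (U.map ⇑(algebraMap (Polynomial k) (RatFunc k)) * M) := by
  induction N with
  | zero =>
    intro M hM d hd hN
    rcases part2_aux M hM d hd with hRR | ⟨U₀, d', hM', hd', hu0, hlt, hpos⟩
    · refine ⟨1, ⟨1, one_ne_zero, by simp⟩, ?_⟩
      rw [Matrix.map_one _ (map_zero _) (map_one _), Matrix.one_mul]
      exact hRR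
    · omega
  | succ N ih =>
    intro M hM d hd hN
    rcases part2_aux M hM d hd with hRR | ⟨U₀, d', hM', hd', ⟨u0, hu0, hU0det⟩, hlt, hpos⟩
    · refine ⟨1, ⟨1, one_ne_zero, by simp⟩, ?_⟩
      rw [Matrix.map_one _ (map_zero _) (map_one _), Matrix.one_mul]
      exact hRR
    · obtain ⟨V, ⟨u, hu, hVdet⟩, hVred⟩ := ih _ hM' d' hd' (by omega)
      refine ⟨V * U₀, ⟨u * u0, mul_ne_zero hu hu0, by
        rw [Matrix.det_mul, hVdet, hU0det, ← Polynomial.C_mul]⟩, ?_⟩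
      have hmap : (V * U₀).map ⇑(algebraMap (Polynomial k) (RatFunc k))
          = V.map ⇑(algebraMap (Polynomial k) (RatFunc k))
            * U₀.map ⇑(algebraMap (Polynomial k) (RatFunc k)) := Matrix.map_mul
      rw [hmap, Matrix.mul_assoc]
      exact hVred

end Stmt12

open Stmt12

/-- A nonsingular matrix `M ∈ k(t)^{n×n}` is row reduced iff `deg det M` equals the sum of
the row degrees, and there is a unimodular `U ∈ k[t]^{n×n}` such that `U·M` is row reduced. -/
theorem stmt_12 {k : Type*} [Field k] {n : ℕ}
    (M : Matrix (Fin n) (Fin n) (RatFunc k)) (hM : M.det ≠ 0) :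
    (RowReduced M ↔ ratDeg M.det = ∑ i, rowDeg (M i)) ∧
    (∃ U : Matrix (Fin n) (Fin n) (Polynomial k),
      (∃ u : k, u ≠ 0 ∧ U.det = Polynomial.C u) ∧
      RowReduced (U.map ⇑(algebraMap (Polynomial k) (RatFunc k)) * M)) := by
  have hex := fun i => rowDeg_eq_int hM i
  choose d hd using hex
  have hsum : (∑ i, rowDeg (M i)) = ((∑ i, d i : ℤ) : WithBot ℤ) := by
    rw [coe_sum_wb]
    exact Finset.sum_congr rfl fun i _ => hd i
  constructor
  · rw [hsum]
    constructor
    · intro hR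
      exact (keyDeg hM hd).mpr (detL_of_rowReduced hM hd hR)
    · intro h
      exact rowReduced_of_detL hM hd ((keyDeg hM hd).mp h)
  · exact part2 _ M hM d hd le_rfl
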